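/- Let f : (i : Fin n) → ((∀ j, D j) → ℝ≥0) be the factors of a Bayesian network given in topological order with parent map pa. Let A ⊆ Fin n be a parent-closed Finset, let F ⊆ A be a Finset of evidence variables, let e : ∀ j, D j be an evidence assignment, and let x₀ : ∀ j, D j be a fixed reference assignment. Then the sum over all assignments y satisfying y j = e j for all j ∈ F and y j = x₀ j for all j ∉ A of ∏_{i ∈ A} f i y equals the sum over all assignments y satisfying y j = e j for all j ∈ F of ∏_{i : Fin n} f i y. That is, the normalization constant of a parent-closed prefix of the network with the evidence instantiated equals the probability of those evidence states under the full joint distribution. -/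
import Mathlib
set_option maxHeartbeats 1000000

/-- A factor `φ` is *local* to a set of variables `C` if it only depends on the
coordinates in `C`. -/
def IsLocal {n : ℕ} {D : Fin n → Type} (C : Finset (Fin n))
    (φ : (∀ j, D j) → NNReal) : Prop :=
  ∀ x y : ∀ j, D j, (∀ j ∈ C, x j = y j) → φ x = φ y

lemma bn_aux
    (n : ℕ) (D : Fin n → Type) [∀ i, Fintype (D i)] [∀ i, Nonempty (D i)]
    [∀ i, DecidableEq (D i)]
    (pa : Fin n → Finset (Fin n)) (hpa : ∀ i : Fin n, ∀ j ∈ pa i, j < i)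
    (f : ∀ _ : Fin n, (∀ j, D j) → NNReal)
    (hlocal : ∀ i : Fin n, IsLocal (insert i (pa i)) (f i))
    (hnorm : ∀ (x : ∀ j, D j) (i : Fin n),
      ∑ s : D i, f i (Function.update x i s) = 1)
    (F : Finset (Fin n)) (e : ∀ j, D j) (x₀ : ∀ j, D j) :
    ∀ k (B : Finset (Fin n)), (∀ i ∈ B, pa i ⊆ B) → F ⊆ B →
      (Finset.univ \ B).card ≤ k →
    ∑ y ∈ Finset.univ.filter
        (fun y : ∀ j, D j => (∀ j ∈ F, y j = e j) ∧ ∀ j, j ∉ B → y j = x₀ j),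
      ∏ i ∈ B, f i y
      =
    ∑ y ∈ Finset.univ.filter (fun y : ∀ j, D j => ∀ j ∈ F, y j = e j),
      ∏ i : Fin n, f i y := by
  intro k
  induction k with
  | zero =>
    intro B _ _ hcard
    have hB : B = Finset.univ := by
      have := Finset.card_eq_zero.mp (Nat.le_zero.mp hcard)
      have := Finset.sdiff_eq_empty_iff_subset.mp this
      exact Finset.eq_univ_iff_forall.mpr fun x => this (Finset.mem_univ x)
    subst hB
    congr 1
    apply Finset.filter_congr
    intro y _
    simp
  | succ k ih =>
    intro B hB hFB hcard
    rcases Finset.eq_empty_or_nonempty (Finset.univ \ B) with hne | hne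
    · have hBu : B = Finset.univ := by
        have := Finset.sdiff_eq_empty_iff_subset.mp hne
        exact Finset.eq_univ_iff_forall.mpr fun x => this (Finset.mem_univ x)
      subst hBu
      congr 1
      apply Finset.filter_congr
      intro y _
      simp
    · set i := (Finset.univ \ B).min' hne with hi
      have hiB : i ∉ B := (Finset.mem_sdiff.mp ((Finset.univ \ B).min'_mem hne)).2
      have hlt : ∀ j : Fin n, j < i → j ∈ B := by
        intro j hj
        by_contra hjB
        have : i ≤ j := Finset.min'_le _ j (Finset.mem_sdiff.mpr ⟨Finset.mem_univ j, hjB⟩)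
        exact absurd hj (not_lt.mpr this)
      have hpaB : pa i ⊆ B := fun j hj => hlt j (hpa i j hj)
      have hiF : i ∉ F := fun h => hiB (hFB h)
      have hB' : ∀ a ∈ insert i B, pa a ⊆ insert i B := by
        intro a ha
        rcases Finset.mem_insert.mp ha with rfl | ha
        · exact hpaB.trans (Finset.subset_insert _ _)
        · exact (hB a ha).trans (Finset.subset_insert _ _)
      have hcard' : (Finset.univ \ insert i B).card ≤ k := by
        rw [Finset.sdiff_insert, Finset.card_erase_of_mem ((Finset.univ \ B).min'_mem hne)]
        omega
      have key :
          ∑ y ∈ Finset.univ.filter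
              (fun y : ∀ j, D j => (∀ j ∈ F, y j = e j) ∧ ∀ j, j ∉ B → y j = x₀ j),
            ∏ j ∈ B, f j y
          = ∑ y ∈ Finset.univ.filter
              (fun y : ∀ j, D j => (∀ j ∈ F, y j = e j) ∧ ∀ j, j ∉ insert i B → y j = x₀ j),
            ∏ j ∈ insert i B, f j y := by
        have reindex : ∀ g : (∀ j, D j) → NNReal,
            ∑ y ∈ Finset.univ.filter
              (fun y : ∀ j, D j => (∀ j ∈ F, y j = e j) ∧ ∀ j, j ∉ B → y j = x₀ j),
              ∑ s : D i, g (Function.update y i s)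
            = ∑ z ∈ Finset.univ.filter
              (fun y : ∀ j, D j => (∀ j ∈ F, y j = e j) ∧ ∀ j, j ∉ insert i B → y j = x₀ j),
              g z := by
          intro g
          rw [← Finset.sum_product']
          apply Finset.sum_bij' (fun p _ => Function.update p.1 i p.2)
            (fun z _ => (Function.update z i (x₀ i), z i))
          · rintro ⟨y, s⟩ hp
            rw [Finset.mem_product, Finset.mem_filter] at hp
            obtain ⟨⟨-, hev, hoff⟩, -⟩ := hp
            rw [Finset.mem_filter]
            refine ⟨Finset.mem_univ _, ?_, ?_⟩
            · intro j hj
              rw [Function.update_of_ne (fun h : j = i => hiF (h ▸ hj))]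
              exact hev j hj
            · intro j hj
              rw [Finset.mem_insert, not_or] at hj
              rw [Function.update_of_ne hj.1]
              exact hoff j hj.2
          · intro z hz
            rw [Finset.mem_filter] at hz
            obtain ⟨-, hev, hoff⟩ := hz
            rw [Finset.mem_product, Finset.mem_filter]
            refine ⟨⟨Finset.mem_univ _, ?_, ?_⟩, Finset.mem_univ _⟩
            · intro j hj
              show Function.update z i (x₀ i) j = e j
              rw [Function.update_of_ne (fun h : j = i => hiF (h ▸ hj))]
              exact hev j hj
            · intro j hj
              show Function.update z i (x₀ i) j = x₀ j
              by_cases hji : j = i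
              · subst hji; rw [Function.update_self]
              · rw [Function.update_of_ne hji]
                exact hoff j (by rw [Finset.mem_insert, not_or]; exact ⟨hji, hj⟩)
          · rintro ⟨y, s⟩ hp
            rw [Finset.mem_product, Finset.mem_filter] at hp
            obtain ⟨⟨-, -, hoff⟩, -⟩ := hp
            have hyi : y i = x₀ i := hoff i hiB
            ext : 1
            · simp [Function.update_idem, hyi]
            · simp
          · intro z _
            simp [Function.update_idem]
          · rintro ⟨y, s⟩ _
            rfl
        calc
          ∑ y ∈ Finset.univ.filter
              (fun y : ∀ j, D j => (∀ j ∈ F, y j = e j) ∧ ∀ j, j ∉ B → y j = x₀ j),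
            ∏ j ∈ B, f j y
            = ∑ y ∈ Finset.univ.filter
              (fun y : ∀ j, D j => (∀ j ∈ F, y j = e j) ∧ ∀ j, j ∉ B → y j = x₀ j),
              ∑ s : D i, (∏ j ∈ insert i B, f j (Function.update y i s)) := by
              apply Finset.sum_congr rfl
              intro y _
              have h1 : ∀ s : D i,
                  ∏ j ∈ insert i B, f j (Function.update y i s)
                  = f i (Function.update y i s) * ∏ j ∈ B, f j y := by
                intro s
                rw [Finset.prod_insert hiB]
                congr 1
                apply Finset.prod_congr rfl
                intro j hj
                apply hlocal j
                intro a ha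
                have haB : a ∈ B := by
                  rcases Finset.mem_insert.mp ha with rfl | ha
                  · exact hj
                  · exact hB j hj ha
                exact Function.update_of_ne (fun h : a = i => hiB (h ▸ haB)) _ _
              have h2 : ∑ s : D i, ∏ j ∈ insert i B, f j (Function.update y i s)
                  = ∏ j ∈ B, f j y := by
                rw [Finset.sum_congr rfl fun s _ => h1 s, ← Finset.sum_mul,
                  hnorm y i, one_mul]
              exact h2.symm
          _ = _ := reindex (fun z => ∏ j ∈ insert i B, f j z)
      rw [key]
      exact ih (insert i B) hB' (hFB.trans (Finset.subset_insert _ _)) hcard'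

/-- For a Bayesian network given in topological order, the normalization constant of
a parent-closed prefix `A` with the evidence `F` instantiated equals the probability
of those evidence states under the full joint distribution. -/
theorem bn_prefix_nc_is_evidence_prob
    (n : ℕ) (D : Fin n → Type) [∀ i, Fintype (D i)] [∀ i, Nonempty (D i)]
    [∀ i, DecidableEq (D i)]
    (pa : Fin n → Finset (Fin n)) (hpa : ∀ i : Fin n, ∀ j ∈ pa i, j < i)
    (f : ∀ _ : Fin n, (∀ j, D j) → NNReal)
    (hlocal : ∀ i : Fin n, IsLocal (insert i (pa i)) (f i))
    (hnorm : ∀ (x : ∀ j, D j) (i : Fin n),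
      ∑ s : D i, f i (Function.update x i s) = 1)
    (A : Finset (Fin n)) (hA : ∀ i ∈ A, pa i ⊆ A)
    (F : Finset (Fin n)) (hF : F ⊆ A)
    (e : ∀ j, D j) (x₀ : ∀ j, D j) :
    ∑ y ∈ Finset.univ.filter
        (fun y : ∀ j, D j => (∀ j ∈ F, y j = e j) ∧ ∀ j, j ∉ A → y j = x₀ j),
      ∏ i ∈ A, f i y
      =
    ∑ y ∈ Finset.univ.filter (fun y : ∀ j, D j => ∀ j ∈ F, y j = e j),
      ∏ i : Fin n, f i y := by
  exact bn_aux n D pa hpa f hlocal hnorm F e x₀ (Finset.univ \ A).card A hA hF le_rfl
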